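/- Let n ≥ 1 and let p, q : Fin n → ℝ be probability vectors (p i ≥ 0, q i ≥ 0, ∑_i p i = 1, ∑_i q i = 1) such that q i = 0 whenever p i = 0. Let ε ≥ 0 and suppose the Kullback–Leibler divergence with logarithm base 2 satisfies ∑_i q i · logb 2 (q i / p i) ≤ ε (with the convention that terms with q i = 0 contribute 0). Then for every x : Fin n → ℝ, ∑_i x i · (q i − p i) ≥ −2 · (max_i |x i|) · √((Real.log 2 / 2) · ε). -/

import Mathlib

open Real Finset

/-- `1 - 1/t ≤ log t` for `t > 0`. -/
lemma aux_log_lower {t : ℝ} (ht : 0 < t) : 1 - 1/t ≤ Real.log t := by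
  have h := Real.log_le_sub_one_of_pos (show (0:ℝ) < 1/t by positivity)
  rw [one_div, Real.log_inv] at h
  rw [one_div]
  linarith

/-- `(t+1) log t ≥ 2(t-1)` for `t ≥ 1`. -/
lemma aux_key {t : ℝ} (ht : 1 ≤ t) : 2*(t-1) ≤ (t+1)*Real.log t := by
  set f : ℝ → ℝ := fun s => (s+1)*Real.log s - 2*(s-1) with hf
  have hder : ∀ s ∈ interior (Set.Ici (1:ℝ)),
      HasDerivAt f (Real.log s + s⁻¹ - 1) s := by
    intro s hs
    rw [interior_Ici] at hs
    have hs0 : (0:ℝ) < s := lt_trans one_pos hs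
    have h1 : HasDerivAt (fun u : ℝ => (u+1)*Real.log u)
        (1*Real.log s + (s+1)*s⁻¹) s :=
      (((hasDerivAt_id s).add_const 1)).mul (Real.hasDerivAt_log hs0.ne')
    have h2 : HasDerivAt f (1*Real.log s + (s+1)*s⁻¹ - 2) s := by
      have h3 := h1.sub ((hasDerivAt_id s).sub_const 1 |>.const_mul 2)
      refine h3.congr_deriv ?_
      ring
    convert h2 using 1
    field_simp
    ring
  have hmono : MonotoneOn f (Set.Ici (1:ℝ)) := by
    apply monotoneOn_of_hasDerivWithinAt_nonneg (convex_Ici 1)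
    · intro s hs
      have hs0 : (0:ℝ) < s := lt_of_lt_of_le one_pos hs
      exact ((((hasDerivAt_id s).add_const 1)).mul
        (Real.hasDerivAt_log hs0.ne') |>.sub
        (((hasDerivAt_id s).sub_const 1).const_mul 2)).continuousAt.continuousWithinAt
    · intro s hs
      exact (hder s hs).hasDerivWithinAt
    · intro s hs
      rw [interior_Ici] at hs
      have hs0 : (0:ℝ) < s := lt_trans one_pos hs
      have := aux_log_lower hs0
      rw [one_div] at this
      linarith
  have h0 : f 1 = 0 := by simp [hf]
  have := hmono (Set.self_mem_Ici) (ht) ht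
  rw [h0] at this
  simp only [hf] at this
  linarith

/-- `(t+1) log t ≤ 2(t-1)` for `0 < t ≤ 1`. -/
lemma aux_key_le {t : ℝ} (ht0 : 0 < t) (ht : t ≤ 1) : (t+1)*Real.log t ≤ 2*(t-1) := by
  have h := aux_key (t := 1/t) (by rw [le_div_iff₀ ht0]; linarith)
  rw [one_div, Real.log_inv] at h
  have ht0' : (0:ℝ) < t := ht0
  have h2 := mul_le_mul_of_nonneg_left h (le_of_lt ht0)
  have e1 : t * (2*(t⁻¹-1)) = 2*(1-t) := by field_simp
  have e2 : t * ((t⁻¹+1)*(-Real.log t)) = -(1+t)*Real.log t := by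
    field_simp
  rw [e1, e2] at h2
  nlinarith [h2]

/-- `3(t-1)² ≤ 2(t+2)(t log t - t + 1)` for `t > 0`. -/
lemma G_nonneg {t : ℝ} (ht : 0 < t) :
    3*(t-1)^2 ≤ 2*(t+2)*(t*Real.log t - t + 1) := by
  set G : ℝ → ℝ := fun s => 2*(s+2)*(s*Real.log s - s + 1) - 3*(s-1)^2 with hG
  have hder : ∀ s : ℝ, 0 < s →
      HasDerivAt G (4*((s+1)*Real.log s - 2*(s-1))) s := by
    intro s hs0
    have hu : HasDerivAt (fun u : ℝ => u*Real.log u - u + 1)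
        (Real.log s) s := by
      have := (hasDerivAt_id s).mul (Real.hasDerivAt_log hs0.ne')
      have h2 := (this.sub (hasDerivAt_id s)).add_const 1
      refine h2.congr_deriv ?_
      simp only [id_eq]
      field_simp
      ring
    have h1 : HasDerivAt (fun u : ℝ => 2*(u+2)*(u*Real.log u - u + 1))
        (2*(s*Real.log s - s + 1) + 2*(s+2)*Real.log s) s := by
      have := ((((hasDerivAt_id s).add_const 2).const_mul 2).mul hu)
      refine this.congr_deriv ?_
      simp only [id_eq]
      ring
    have h2 : HasDerivAt (fun u : ℝ => 3*(u-1)^2) (6*(s-1)) s := by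
      have := (((hasDerivAt_id s).sub_const 1).pow 2).const_mul 3
      refine this.congr_deriv ?_
      simp only [id_eq]
      ring
    have h3 := h1.sub h2
    refine h3.congr_deriv ?_
    ring
  rcases le_or_gt 1 t with h1 | h1
  · -- monotone on [1, ∞)
    have hmono : MonotoneOn G (Set.Ici (1:ℝ)) := by
      apply monotoneOn_of_hasDerivWithinAt_nonneg (convex_Ici 1)
        (f' := fun s => 4*((s+1)*Real.log s - 2*(s-1)))
      · intro s hs
        exact (hder s (lt_of_lt_of_le one_pos hs)).continuousAt.continuousWithinAt
      · intro s hs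
        rw [interior_Ici] at hs
        exact (hder s (lt_trans one_pos hs)).hasDerivWithinAt
      · intro s hs
        rw [interior_Ici] at hs
        have := aux_key (le_of_lt hs)
        linarith
    have h0 : G 1 = 0 := by simp [hG]
    have := hmono Set.self_mem_Ici h1 h1
    rw [h0] at this
    simp only [hG] at this
    linarith
  · -- antitone on (0, 1]
    have hanti : AntitoneOn G (Set.Ioc (0:ℝ) 1) := by
      apply antitoneOn_of_hasDerivWithinAt_nonpos (convex_Ioc 0 1)
        (f' := fun s => 4*((s+1)*Real.log s - 2*(s-1)))
      · intro s hs
        exact (hder s hs.1).continuousAt.continuousWithinAt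
      · intro s hs
        rw [interior_Ioc] at hs
        exact (hder s hs.1).hasDerivWithinAt
      · intro s hs
        rw [interior_Ioc] at hs
        have := aux_key_le hs.1 (le_of_lt hs.2)
        linarith
    have h0 : G 1 = 0 := by simp [hG]
    have := hanti ⟨ht, le_of_lt h1⟩ ⟨one_pos, le_refl 1⟩ (le_of_lt h1)
    rw [h0] at this
    simp only [hG] at this
    linarith

/-- pointwise Pinsker-type bound. -/
lemma aux_pointwise {p q : ℝ} (hp : 0 < p) (hq : 0 ≤ q) :
    3*(q-p)^2/(q+2*p) ≤ 2*(q*Real.log (q/p) - q + p) := by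
  rcases hq.eq_or_lt with h | h
  · subst h
    simp only [zero_div, Real.log_zero, mul_zero, zero_mul, zero_sub, neg_zero, zero_add,
      zero_mul, sub_zero]
    rw [div_le_iff₀ (by positivity)]
    nlinarith
  · have ht : 0 < q / p := div_pos h hp
    set t := q / p with htdef
    set L := Real.log t with hLdef
    have hg := G_nonneg ht
    rw [← hLdef] at hg
    have hpne : p ≠ 0 := hp.ne'
    have hq2 : q = t * p := by rw [htdef]; field_simp
    rw [div_le_iff₀ (by positivity), hq2]
    have h2 := mul_le_mul_of_nonneg_right hg (mul_pos hp hp).le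
    nlinarith [h2]

theorem stmt_13 (n : ℕ) (hn : 0 < n) (p q : Fin n → ℝ)
    (hp : ∀ i, 0 ≤ p i) (hq : ∀ i, 0 ≤ q i)
    (hps : ∑ i, p i = 1) (hqs : ∑ i, q i = 1)
    (habs : ∀ i, p i = 0 → q i = 0)
    (ε : ℝ) (hε : 0 ≤ ε)
    (hKL : ∑ i, q i * Real.logb 2 (q i / p i) ≤ ε)
    (x : Fin n → ℝ) :
    -(2 * (⨆ i, |x i|) * Real.sqrt ((Real.log 2 / 2) * ε)) ≤ ∑ i, x i * (q i - p i) := by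
  haveI : Nonempty (Fin n) := ⟨⟨0, hn⟩⟩
  set M := ⨆ i, |x i| with hM
  have hMi : ∀ i, |x i| ≤ M := fun i =>
    le_ciSup (f := fun i => |x i|) (Set.Finite.bddAbove (Set.finite_range _)) i
  have hM0 : 0 ≤ M := le_trans (abs_nonneg _) (hMi ⟨0, hn⟩)
  -- weights
  set w : Fin n → ℝ := fun i => (q i + 2*p i)/3 with hw
  have hw0 : ∀ i, 0 ≤ w i := fun i => by
    have := hp i; have := hq i; simp only [hw]; positivity
  set f : Fin n → ℝ := fun i => Real.sqrt (w i) with hf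
  set g : Fin n → ℝ := fun i => |q i - p i| / Real.sqrt (w i) with hg
  have hfg : ∀ i, f i * g i = |q i - p i| := by
    intro i
    by_cases hwi : w i = 0
    · have hpi : p i = 0 := by
        have := hp i; have := hq i
        simp only [hw] at hwi
        nlinarith
      have hqi : q i = 0 := habs i hpi
      simp [hf, hg, hwi, hpi, hqi]
    · have : Real.sqrt (w i) ≠ 0 :=
        Real.sqrt_ne_zero'.mpr (lt_of_le_of_ne (hw0 i) (Ne.symm hwi))
      simp only [hf, hg]
      field_simp
  have hfs : ∑ i, (f i)^2 = 1 := by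
    have : ∀ i, (f i)^2 = w i := fun i => Real.sq_sqrt (hw0 i)
    simp only [this, hw]
    rw [← Finset.sum_div]
    rw [Finset.sum_add_distrib, ← Finset.mul_sum, hps, hqs]
    norm_num
  have hg2 : ∀ i, (g i)^2 ≤ 2*(q i * Real.log (q i / p i) - q i + p i) := by
    intro i
    rcases (hp i).eq_or_lt with hpi | hpi
    · have hqi : q i = 0 := habs i hpi.symm
      simp [hg, hqi, ← hpi]
    · have hwpos : 0 < w i := by
        have := hq i; simp only [hw]; positivity
      have : (g i)^2 = 3*(q i - p i)^2/(q i + 2*p i) := by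
        simp only [hg]
        rw [div_pow, sq_abs, Real.sq_sqrt (hw0 i)]
        simp only [hw]
        rw [div_div_eq_mul_div]
        ring
      rw [this]
      exact aux_pointwise hpi (hq i)
  -- natural-log KL
  have hlog2 : (0:ℝ) < Real.log 2 := Real.log_pos one_lt_two
  have hL : ∑ i, q i * Real.log (q i / p i) ≤ Real.log 2 * ε := by
    have h : (∑ i, q i * Real.log (q i / p i)) / Real.log 2 ≤ ε := by
      have : ∑ i, q i * Real.logb 2 (q i / p i)
          = (∑ i, q i * Real.log (q i / p i)) / Real.log 2 := by
        rw [Finset.sum_div]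
        refine Finset.sum_congr rfl fun i _ => ?_
        rw [Real.logb, mul_div_assoc]
      rw [this] at hKL
      exact hKL
    calc ∑ i, q i * Real.log (q i / p i)
        = (∑ i, q i * Real.log (q i / p i)) / Real.log 2 * Real.log 2 := by
          field_simp
      _ ≤ ε * Real.log 2 := mul_le_mul_of_nonneg_right h hlog2.le
      _ = Real.log 2 * ε := mul_comm _ _
  have hsg : ∑ i, (g i)^2 ≤ 2*(Real.log 2 * ε) := by
    calc ∑ i, (g i)^2 ≤ ∑ i, 2*(q i * Real.log (q i / p i) - q i + p i) :=
          Finset.sum_le_sum fun i _ => hg2 i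
      _ = 2*(∑ i, q i * Real.log (q i / p i)) - 2*(∑ i, q i) + 2*(∑ i, p i) := by
          rw [Finset.mul_sum, Finset.mul_sum, Finset.mul_sum,
            ← Finset.sum_sub_distrib, ← Finset.sum_add_distrib]
          exact Finset.sum_congr rfl fun i _ => by ring
      _ = 2*(∑ i, q i * Real.log (q i / p i)) := by rw [hps, hqs]; ring
      _ ≤ 2*(Real.log 2 * ε) := by linarith
  have hcs : (∑ i, |q i - p i|)^2 ≤ 2*(Real.log 2 * ε) := by
    calc (∑ i, |q i - p i|)^2 = (∑ i, f i * g i)^2 := by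
          congr 1; exact (Finset.sum_congr rfl fun i _ => (hfg i).symm)
      _ ≤ (∑ i, (f i)^2) * (∑ i, (g i)^2) :=
          Finset.sum_mul_sq_le_sq_mul_sq _ _ _
      _ = ∑ i, (g i)^2 := by rw [hfs, one_mul]
      _ ≤ 2*(Real.log 2 * ε) := hsg
  have htv : ∑ i, |q i - p i| ≤ Real.sqrt (2*(Real.log 2 * ε)) := by
    rw [Real.le_sqrt (Finset.sum_nonneg fun i _ => abs_nonneg _) (by positivity)]
    exact hcs
  have hsqrt_eq : Real.sqrt (2*(Real.log 2 * ε)) = 2 * Real.sqrt ((Real.log 2 / 2) * ε) := by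
    rw [show 2*(Real.log 2*ε) = 2^2*((Real.log 2/2)*ε) by ring,
      Real.sqrt_mul (by positivity), Real.sqrt_sq (by norm_num)]
  rw [neg_le]
  calc -(∑ i, x i * (q i - p i)) ≤ |∑ i, x i * (q i - p i)| := neg_le_abs _
    _ ≤ ∑ i, |x i * (q i - p i)| := Finset.abs_sum_le_sum_abs _ _
    _ = ∑ i, |x i| * |q i - p i| := by simp [abs_mul]
    _ ≤ ∑ i, M * |q i - p i| :=
        Finset.sum_le_sum fun i _ => mul_le_mul_of_nonneg_right (hMi i) (abs_nonneg _)
    _ = M * ∑ i, |q i - p i| := by rw [← Finset.mul_sum]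
    _ ≤ M * Real.sqrt (2*(Real.log 2 * ε)) := mul_le_mul_of_nonneg_left htv hM0
    _ = 2 * M * Real.sqrt ((Real.log 2 / 2) * ε) := by rw [hsqrt_eq]; ring
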